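/- Let E₁ and E₂ be Banach spaces over 𝕜, let 𝒜₁ ⊆ B(E₁) and 𝒜₂ ⊆ B(E₂) be standard subalgebras, and let T : 𝒜₁ → 𝒜₂ be a biseparating linear bijection. Suppose S : E₁ → E₂ and Ψ : E₁* → E₂* are (plain) linear bijections satisfying T(e ⊗ e*) = S(e) ⊗ Ψ(e*) for all e ∈ E₁ and e* ∈ E₁*. Then there exists a nonzero scalar α ∈ 𝕜 such that (Ψ(e*)) ∘ S = α · e* for every e* ∈ E₁*. -/

import Mathlib

set_option synthInstance.maxHeartbeats 400000
set_option maxHeartbeats 1000000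

/-- A subalgebra of `B(E)` is *standard* if it contains every continuous finite-rank
operator (it contains the identity automatically, being a subalgebra). -/
def IsStandardSubalgebra (𝕜 : Type*) [RCLike 𝕜] {E : Type*} [NormedAddCommGroup E]
    [NormedSpace 𝕜 E] (𝒜 : Subalgebra 𝕜 (E →L[𝕜] E)) : Prop :=
  ∀ A : E →L[𝕜] E, FiniteDimensional 𝕜 (LinearMap.range (A : E →ₗ[𝕜] E)) → A ∈ 𝒜

/-- The rank-one operator `e ⊗ e*` sending `e'` to `e*(e') • e`. -/
noncomputable def rankOne {𝕜 : Type*} [RCLike 𝕜] {E : Type*} [NormedAddCommGroup E]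
    [NormedSpace 𝕜 E] (e : E) (f : E →L[𝕜] 𝕜) : E →L[𝕜] E :=
  f.smulRight e

lemma rankOne_mul {𝕜 : Type*} [RCLike 𝕜] {E : Type*} [NormedAddCommGroup E]
    [NormedSpace 𝕜 E] (e e' : E) (f f' : E →L[𝕜] 𝕜) :
    rankOne e f * rankOne e' f' = f e' • rankOne e f' := by
  ext x
  simp [rankOne, ContinuousLinearMap.mul_apply, smul_smul, mul_comm]

lemma rankOne_ne_zero {𝕜 : Type*} [RCLike 𝕜] {E : Type*} [NormedAddCommGroup E]
    [NormedSpace 𝕜 E] {e : E} {f : E →L[𝕜] 𝕜} (he : e ≠ 0) (hf : f ≠ 0) :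
    rankOne e f ≠ 0 := by
  obtain ⟨x, hx⟩ : ∃ x, f x ≠ 0 := by
    by_contra h
    push_neg at h
    exact hf (ContinuousLinearMap.ext fun x => by simp [h x])
  intro h0
  have : (rankOne e f) x = 0 := by rw [h0]; simp
  rw [show (rankOne e f) x = f x • e from rfl] at this
  exact (smul_ne_zero hx he) this

lemma rankOne_finrank {𝕜 : Type*} [RCLike 𝕜] {E : Type*} [NormedAddCommGroup E]
    [NormedSpace 𝕜 E] (e : E) (f : E →L[𝕜] 𝕜) :
    FiniteDimensional 𝕜 (LinearMap.range ((rankOne e f) : E →ₗ[𝕜] E)) := by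
  have h : LinearMap.range ((rankOne e f) : E →ₗ[𝕜] E) ≤ Submodule.span 𝕜 {e} := by
    rintro x ⟨y, rfl⟩
    simp only [ContinuousLinearMap.coe_coe, rankOne, ContinuousLinearMap.smulRight_apply]
    exact Submodule.smul_mem _ _ (Submodule.mem_span_singleton_self e)
  exact Submodule.finiteDimensional_of_le h

theorem psi_comp_S_is_scalar_multiple
    {𝕜 : Type*} [RCLike 𝕜]
    {E₁ E₂ : Type*} [NormedAddCommGroup E₁] [NormedSpace 𝕜 E₁] [CompleteSpace E₁]
    [NormedAddCommGroup E₂] [NormedSpace 𝕜 E₂] [CompleteSpace E₂]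
    (𝒜₁ : Subalgebra 𝕜 (E₁ →L[𝕜] E₁)) (𝒜₂ : Subalgebra 𝕜 (E₂ →L[𝕜] E₂))
    (h𝒜₁ : IsStandardSubalgebra 𝕜 𝒜₁) (h𝒜₂ : IsStandardSubalgebra 𝕜 𝒜₂)
    (T : 𝒜₁ →ₗ[𝕜] 𝒜₂) (hbij : Function.Bijective T)
    (hsep : ∀ a b : 𝒜₁, a * b = 0 → T a * T b = 0)
    (hsep' : ∀ a b : 𝒜₁, T a * T b = 0 → a * b = 0)
    (S : E₁ →ₗ[𝕜] E₂) (Ψ : (E₁ →L[𝕜] 𝕜) →ₗ[𝕜] (E₂ →L[𝕜] 𝕜))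
    (hS : Function.Bijective S) (hΨ : Function.Bijective Ψ)
    (hrep : ∀ (e : E₁) (f : E₁ →L[𝕜] 𝕜) (h : rankOne e f ∈ 𝒜₁),
      ((T ⟨rankOne e f, h⟩ : E₂ →L[𝕜] E₂)) = rankOne (S e) (Ψ f)) :
    ∃ α : 𝕜, α ≠ 0 ∧ ∀ (f : E₁ →L[𝕜] 𝕜) (e : E₁), Ψ f (S e) = α * f e := by
  rcases subsingleton_or_nontrivial E₁ with hsub | hnt
  · refine ⟨1, one_ne_zero, fun f e => ?_⟩
    have he : e = 0 := Subsingleton.elim e 0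
    simp [he]
  obtain ⟨e₀, he₀⟩ := exists_ne (0 : E₁)
  obtain ⟨f₀, _, hf₀e₀⟩ := exists_dual_vector 𝕜 e₀ (norm_ne_zero_iff.mpr he₀)
  have hf₀e₀' : f₀ e₀ ≠ 0 := by
    rw [hf₀e₀]
    exact_mod_cast norm_ne_zero_iff.mpr he₀
  have hf₀ : f₀ ≠ 0 := fun h => hf₀e₀' (by simp [h])
  have hSe₀ : S e₀ ≠ 0 := fun h => he₀ (hS.injective (by simp [h]))
  have hΨf₀ : Ψ f₀ ≠ 0 := fun h => hf₀ (hΨ.injective (by simp [h]))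
  have hmem : ∀ (e : E₁) (f : E₁ →L[𝕜] 𝕜), rankOne e f ∈ 𝒜₁ :=
    fun e f => h𝒜₁ _ (rankOne_finrank e f)
  -- key equivalence
  have key : ∀ (f : E₁ →L[𝕜] 𝕜) (e : E₁), f e = 0 ↔ Ψ f (S e) = 0 := by
    intro f e
    set a : 𝒜₁ := ⟨rankOne e₀ f, hmem _ _⟩ with ha
    set b : 𝒜₁ := ⟨rankOne e f₀, hmem _ _⟩ with hb
    have hab : ((a * b : 𝒜₁) : E₁ →L[𝕜] E₁) = f e • rankOne e₀ f₀ := by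
      rw [MulMemClass.coe_mul, ha, hb]
      exact rankOne_mul e₀ e f f₀
    have hTab : ((T a * T b : 𝒜₂) : E₂ →L[𝕜] E₂)
        = Ψ f (S e) • rankOne (S e₀) (Ψ f₀) := by
      rw [MulMemClass.coe_mul, hrep e₀ f (hmem _ _), hrep e f₀ (hmem _ _)]
      exact rankOne_mul (S e₀) (S e) (Ψ f) (Ψ f₀)
    have hrne : rankOne e₀ f₀ ≠ 0 := rankOne_ne_zero he₀ hf₀
    have hrne' : rankOne (S e₀) (Ψ f₀) ≠ 0 := rankOne_ne_zero hSe₀ hΨf₀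
    constructor
    · intro h
      have hab0 : a * b = 0 := by
        apply Subtype.ext
        rw [hab, h, zero_smul]
        rfl
      have := hsep a b hab0
      have h2 : Ψ f (S e) • rankOne (S e₀) (Ψ f₀) = 0 := by
        rw [← hTab, this]
        rfl
      rcases smul_eq_zero.mp h2 with h3 | h3
      · exact h3
      · exact absurd h3 hrne'
    · intro h
      have hTab0 : T a * T b = 0 := by
        apply Subtype.ext
        rw [hTab, h, zero_smul]
        rfl
      have := hsep' a b hTab0
      have h2 : f e • rankOne e₀ f₀ = 0 := by
        rw [← hab, this]
        rfl
      rcases smul_eq_zero.mp h2 with h3 | h3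
      · exact h3
      · exact absurd h3 hrne
  -- existence of c(e)
  have hc : ∀ e : E₁, ∃ c : 𝕜, ∀ f : E₁ →L[𝕜] 𝕜, Ψ f (S e) = c * f e := by
    intro e
    by_cases he : e = 0
    · exact ⟨0, fun f => by simp [he]⟩
    obtain ⟨g, _, hge⟩ := exists_dual_vector 𝕜 e (norm_ne_zero_iff.mpr he)
    have hge' : g e ≠ 0 := by
      rw [hge]
      exact_mod_cast norm_ne_zero_iff.mpr he
    set g₁ : E₁ →L[𝕜] 𝕜 := (g e)⁻¹ • g with hg₁def
    have hg₁ : g₁ e = 1 := by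
      simp only [hg₁def, ContinuousLinearMap.smul_apply, smul_eq_mul]
      field_simp
    refine ⟨Ψ g₁ (S e), fun f => ?_⟩
    have hker : (f - f e • g₁) e = 0 := by
      simp [hg₁]
    have h0 := (key (f - f e • g₁) e).mp hker
    rw [map_sub, map_smul] at h0
    simp only [ContinuousLinearMap.sub_apply, ContinuousLinearMap.smul_apply,
      smul_eq_mul] at h0
    have := sub_eq_zero.mp h0
    rw [this, mul_comm]
  -- existence of d(f)
  have hd : ∀ f : E₁ →L[𝕜] 𝕜, ∃ d : 𝕜, ∀ e : E₁, Ψ f (S e) = d * f e := by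
    intro f
    by_cases hf : f = 0
    · exact ⟨0, fun e => by simp [hf]⟩
    obtain ⟨x, hx⟩ : ∃ x, f x ≠ 0 := by
      by_contra h
      push_neg at h
      exact hf (ContinuousLinearMap.ext fun x => by simp [h x])
    set x₁ : E₁ := (f x)⁻¹ • x with hx₁def
    have hx₁ : f x₁ = 1 := by
      simp only [hx₁def, map_smul, smul_eq_mul]
      field_simp
    refine ⟨Ψ f (S x₁), fun e => ?_⟩
    have hker : f (e - f e • x₁) = 0 := by
      simp [hx₁]
    have h0 := (key f (e - f e • x₁)).mp hker
    rw [map_sub, map_smul] at h0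
    simp only [ContinuousLinearMap.map_sub, ContinuousLinearMap.map_smul,
      smul_eq_mul] at h0
    have := sub_eq_zero.mp h0
    rw [this, mul_comm]
  choose c hcspec using hc
  choose d hdspec using hd
  have hcd : ∀ (e : E₁) (f : E₁ →L[𝕜] 𝕜), f e ≠ 0 → c e = d f := by
    intro e f h
    have h1 := hcspec e f
    have h2 := hdspec f e
    exact mul_right_cancel₀ h (h1.symm.trans h2)
  refine ⟨c e₀, ?_, ?_⟩
  · intro h
    have hne : Ψ f₀ (S e₀) ≠ 0 := fun h' => hf₀e₀' ((key f₀ e₀).mpr h')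
    exact hne (by rw [hcspec e₀ f₀, h, zero_mul])
  · intro f e
    by_cases hfe : f e = 0
    · rw [(key f e).mp hfe, hfe, mul_zero]
    have hce : c e = c e₀ := by
      by_cases h1 : f e₀ = 0
      · by_cases h2 : f₀ e = 0
        · have hg : (f + f₀) e ≠ 0 := by
            simp [ContinuousLinearMap.add_apply, h2, hfe]
          have hg0 : (f + f₀) e₀ ≠ 0 := by
            simp [ContinuousLinearMap.add_apply, h1, hf₀e₀']
          rw [hcd e (f + f₀) hg, ← hcd e₀ (f + f₀) hg0]
        · rw [hcd e f₀ h2, ← hcd e₀ f₀ hf₀e₀']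
      · rw [hcd e f hfe, ← hcd e₀ f h1]
    rw [hcspec e f, hce]
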